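/- Let S ⊆ ℝ^d satisfy 0 < width(S) < ∞. Then the convex hull of S' is a non-empty, convex, centrally-symmetric subset of (ℝ^d)* whose relative interior contains no lattice point of (ℤ^d)* other than the origin; moreover, the lattice points on the boundary of conv(S') are precisely the elements of S'. -/

import Mathlib

open Set

noncomputable section

/-- Coordinatewise cast of an integer vector into `ℝ^d`. -/
def ic {d : ℕ} (v : Fin d → ℤ) : Fin d → ℝ := fun i => (v i : ℝ)

/-- Evaluation of an integer dual vector `v ∈ (ℤ^d)*` at a point `x ∈ ℝ^d`. -/
def ieval {d : ℕ} (v : Fin d → ℤ) (x : Fin d → ℝ) : ℝ := ∑ i, (v i : ℝ) * x i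

/-- `v` is a direction in which `S` is bounded (i.e. `v ∈ D(S)`). -/
def IsBddDir {d : ℕ} (S : Set (Fin d → ℝ)) (v : Fin d → ℤ) : Prop :=
  BddAbove (ieval v '' S) ∧ BddBelow (ieval v '' S)

/-- The width of `S` in direction `v`: `sup v(S) − inf v(S)`. -/
def dirWidth {d : ℕ} (S : Set (Fin d → ℝ)) (v : Fin d → ℤ) : ℝ :=
  sSup (ieval v '' S) - sInf (ieval v '' S)

/-- The lattice width of `S`: the infimum of the widths over all nonzero
    integer directions in which `S` is bounded (`⊤` if there is no such direction). -/
def latticeWidth {d : ℕ} (S : Set (Fin d → ℝ)) : EReal :=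
  ⨅ v ∈ {v : Fin d → ℤ | v ≠ 0 ∧ IsBddDir S v}, ((dirWidth S v : ℝ) : EReal)

/-- The set `S'` of lattice width directions of `S`. -/
def widthDirs {d : ℕ} (S : Set (Fin d → ℝ)) : Set (Fin d → ℤ) :=
  {v | v ≠ 0 ∧ IsBddDir S v ∧ ((dirWidth S v : ℝ) : EReal) = latticeWidth S}

/-- oscillation bound -/
def Osc {d : ℕ} (S : Set (Fin d → ℝ)) (x : Fin d → ℝ) (C : ℝ) : Prop :=
  ∀ s ∈ S, ∀ t ∈ S, (∑ i, x i * s i) - (∑ i, x i * t i) ≤ C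

section OscLemmas

variable {d : ℕ} {S : Set (Fin d → ℝ)}

lemma ic_eval (v : Fin d → ℤ) (s : Fin d → ℝ) : (∑ i, ic v i * s i) = ieval v s := rfl

lemma osc_of_bdd {v : Fin d → ℤ} (hb : IsBddDir S v) : Osc S (ic v) (dirWidth S v) := by
  intro s hs t ht
  rw [ic_eval, ic_eval]
  have h1 : ieval v s ≤ sSup (ieval v '' S) := le_csSup hb.1 ⟨s, hs, rfl⟩
  have h2 : sInf (ieval v '' S) ≤ ieval v t := csInf_le hb.2 ⟨t, ht, rfl⟩
  unfold dirWidth; linarith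

lemma osc_mono {x : Fin d → ℝ} {C C' : ℝ} (h : Osc S x C) (hC : C ≤ C') : Osc S x C' :=
  fun s hs t ht => le_trans (h s hs t ht) hC

lemma bdd_of_osc (hne : S.Nonempty) {v : Fin d → ℤ} {C : ℝ} (h : Osc S (ic v) C) :
    IsBddDir S v ∧ dirWidth S v ≤ C := by
  obtain ⟨s₀, hs₀⟩ := hne
  have hb : IsBddDir S v := by
    constructor
    · refine ⟨ieval v s₀ + C, ?_⟩
      rintro _ ⟨s, hs, rfl⟩
      have := h s hs s₀ hs₀
      rw [ic_eval, ic_eval] at this; linarith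
    · refine ⟨ieval v s₀ - C, ?_⟩
      rintro _ ⟨s, hs, rfl⟩
      have := h s₀ hs₀ s hs
      rw [ic_eval, ic_eval] at this; linarith
  refine ⟨hb, ?_⟩
  have hsub : sSup (ieval v '' S) ≤ sInf (ieval v '' S) + C := by
    apply csSup_le (Set.Nonempty.image _ ⟨s₀, hs₀⟩)
    rintro _ ⟨s, hs, rfl⟩
    have h2 : ieval v s - C ≤ sInf (ieval v '' S) := by
      apply le_csInf (Set.Nonempty.image _ ⟨s₀, hs₀⟩)
      rintro _ ⟨t, ht, rfl⟩
      have := h s hs t ht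
      rw [ic_eval, ic_eval] at this; linarith
    linarith
  unfold dirWidth; linarith

lemma osc_nonneg (hne : S.Nonempty) {x : Fin d → ℝ} {C : ℝ} (h : Osc S x C) : 0 ≤ C := by
  obtain ⟨s₀, hs₀⟩ := hne
  have := h s₀ hs₀ s₀ hs₀
  linarith

lemma osc_add {x y : Fin d → ℝ} {C D : ℝ} (hx : Osc S x C) (hy : Osc S y D) :
    Osc S (x + y) (C + D) := by
  intro s hs t ht
  have h1 := hx s hs t ht
  have h2 := hy s hs t ht
  simp only [Pi.add_apply, add_mul, Finset.sum_add_distrib]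
  linarith

lemma osc_smul_nonneg {x : Fin d → ℝ} {C a : ℝ} (hx : Osc S x C) (ha : 0 ≤ a) :
    Osc S (a • x) (a * C) := by
  intro s hs t ht
  have h1 := hx s hs t ht
  simp only [Pi.smul_apply, smul_eq_mul, mul_assoc, ← Finset.mul_sum]
  nlinarith

lemma osc_neg {x : Fin d → ℝ} {C : ℝ} (hx : Osc S x C) : Osc S (-x) C := by
  intro s hs t ht
  have h1 := hx t ht s hs
  simp only [Pi.neg_apply, neg_mul, Finset.sum_neg_distrib]
  linarith

lemma osc_smul {x : Fin d → ℝ} {C a : ℝ} (hx : Osc S x C) (hC : 0 ≤ C) :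
    Osc S (a • x) (|a| * C) := by
  rcases le_or_gt 0 a with ha | ha
  · rw [abs_of_nonneg ha]; exact osc_smul_nonneg hx ha
  · rw [abs_of_neg ha]
    have : a • x = -((-a) • x) := by ext i; simp
    rw [this]
    exact osc_neg (osc_smul_nonneg hx (by linarith))

lemma osc_zero (hS : S.Nonempty → True) : Osc S (0 : Fin d → ℝ) 0 := by
  intro s hs t ht; simp

lemma osc_sum {α : Type*} (F : Finset α) (f : α → Fin d → ℝ) (g : α → ℝ)
    (h : ∀ x ∈ F, Osc S (f x) (g x)) : Osc S (∑ x ∈ F, f x) (∑ x ∈ F, g x) := by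
  classical
  induction F using Finset.induction_on with
  | empty => simpa using osc_zero (fun _ => trivial)
  | @insert a F' hx ih =>
    rw [Finset.sum_insert hx, Finset.sum_insert hx]
    exact osc_add (h a (Finset.mem_insert_self a F'))
      (ih fun x hxF => h x (Finset.mem_insert_of_mem hxF))

end OscLemmas

section ICLemmas

variable {d : ℕ}

lemma ic_zero : ic (0 : Fin d → ℤ) = 0 := by ext i; simp [ic]

lemma ic_eq_zero_iff {v : Fin d → ℤ} : ic v = 0 ↔ v = 0 := by
  constructor
  · intro h; ext i
    have := congrFun h i
    simp only [ic, Pi.zero_apply] at this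
    exact_mod_cast this
  · rintro rfl; exact ic_zero

lemma ic_neg (v : Fin d → ℤ) : ic (-v) = -ic v := by ext i; simp [ic]

lemma ic_add (v w : Fin d → ℤ) : ic (v + w) = ic v + ic w := by ext i; simp [ic]

lemma ic_zsmul (n : ℤ) (v : Fin d → ℤ) : ic (n • v) = (n : ℝ) • ic v := by
  ext i; simp [ic]

lemma ic_sum {α : Type*} (F : Finset α) (f : α → Fin d → ℤ) :
    ic (∑ x ∈ F, f x) = ∑ x ∈ F, ic (f x) := by
  classical
  induction F using Finset.induction_on with
  | empty => simp [ic_zero]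
  | @insert a F' hx ih => rw [Finset.sum_insert hx, Finset.sum_insert hx, ic_add, ih]

end ICLemmas

section MainLemmas

variable {d : ℕ} {S : Set (Fin d → ℝ)}

lemma latticeWidth_le {v : Fin d → ℤ} (hv : v ≠ 0) (hb : IsBddDir S v) :
    latticeWidth S ≤ ((dirWidth S v : ℝ) : EReal) := by
  exact iInf₂_le v ⟨hv, hb⟩

/-- the real lattice width -/
lemma exists_real_width (hpos : (0 : EReal) < latticeWidth S) (hfin : latticeWidth S < ⊤) :
    ∃ m : ℝ, 0 < m ∧ latticeWidth S = ((m : ℝ) : EReal) := by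
  have hbot : latticeWidth S ≠ ⊥ := fun h => by simp [h] at hpos
  have heq := (EReal.coe_toReal hfin.ne hbot).symm
  refine ⟨(latticeWidth S).toReal, ?_, heq⟩
  rw [heq] at hpos
  exact_mod_cast hpos

lemma m_le_dirWidth {m : ℝ} (hm : latticeWidth S = ((m : ℝ) : EReal))
    {v : Fin d → ℤ} (hv : v ≠ 0) (hb : IsBddDir S v) : m ≤ dirWidth S v := by
  have := latticeWidth_le hv hb
  rw [hm] at this
  exact_mod_cast this

lemma widthDirs_neg {v : Fin d → ℤ} (hne : S.Nonempty) (hv : v ∈ widthDirs S) :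
    -v ∈ widthDirs S := by
  obtain ⟨hv0, hb, heq⟩ := hv
  have hosc : Osc S (ic (-v)) (dirWidth S v) := by
    rw [ic_neg]; exact osc_neg (osc_of_bdd hb)
  obtain ⟨hb', hle⟩ := bdd_of_osc hne hosc
  have hosc2 : Osc S (ic v) (dirWidth S (-v)) := by
    have := osc_neg (osc_of_bdd hb')
    rwa [ic_neg, neg_neg] at this
  obtain ⟨_, hle2⟩ := bdd_of_osc hne hosc2
  have : dirWidth S (-v) = dirWidth S v := le_antisymm hle hle2
  exact ⟨fun h => hv0 (by simpa using congrArg Neg.neg h), hb', by rw [this]; exact heq⟩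

end MainLemmas

section Dirichlet

lemma abs_sub_lt_one_of_floor_eq {a b : ℝ} (h : ⌊a⌋ = ⌊b⌋) : |a - b| < 1 := by
  have h1 := Int.floor_le a
  have h2 := Int.lt_floor_add_one a
  have h3 := Int.floor_le b
  have h4 := Int.lt_floor_add_one b
  rw [h] at h1 h2
  rw [abs_sub_lt_iff]
  constructor <;> push_cast at * <;> linarith

lemma dirichlet_simul {α : Type*} (F : Finset α) (c : α → ℝ) {ε : ℝ}
    (hε : 0 < ε) :
    ∃ q : ℕ, 0 < q ∧ ∃ P : α → ℤ, ∀ x ∈ F, |(q : ℝ) * c x - (P x : ℝ)| ≤ ε := by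
  classical
  obtain ⟨M, hM⟩ := exists_nat_gt (1 / ε)
  have hM0 : 0 < M := by
    have h1 : (0 : ℝ) < 1 / ε := by positivity
    have : (0 : ℝ) < (M : ℕ) := lt_trans h1 hM
    exact_mod_cast this
  have hMR : (0 : ℝ) < (M : ℝ) := by exact_mod_cast hM0
  -- the pigeonhole map
  have key : ∀ (n : ℕ) (y : ℝ), (⌊Int.fract ((n : ℝ) * y) * M⌋).toNat < M := by
    intro n y
    have hf0 : (0 : ℝ) ≤ Int.fract ((n : ℝ) * y) := Int.fract_nonneg _
    have hf1 : Int.fract ((n : ℝ) * y) < 1 := Int.fract_lt_one _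
    have h0 : 0 ≤ ⌊Int.fract ((n : ℝ) * y) * M⌋ := Int.floor_nonneg.mpr (mul_nonneg hf0 hMR.le)
    have hlt : ⌊Int.fract ((n : ℝ) * y) * M⌋ < (M : ℤ) := by
      apply Int.floor_lt.mpr
      push_cast
      nlinarith
    omega
  set f : Fin (M ^ F.card + 1) → (F → Fin M) := fun n x =>
    ⟨(⌊Int.fract ((n : ℝ) * c x) * M⌋).toNat, key n (c x)⟩ with hf
  have hcard : Fintype.card (F → Fin M) < Fintype.card (Fin (M ^ F.card + 1)) := by
    rw [Fintype.card_fun, Fintype.card_fin, Fintype.card_coe, Fintype.card_fin]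
    omega
  obtain ⟨n₁, n₂, hne, hfeq⟩ := Fintype.exists_ne_map_eq_of_card_lt f hcard
  wlog hlt : (n₁ : ℕ) < (n₂ : ℕ) generalizing n₁ n₂
  · exact this n₂ n₁ hne.symm hfeq.symm (by omega)
  refine ⟨(n₂ : ℕ) - (n₁ : ℕ), by omega, fun x => ⌊((n₂ : ℕ) : ℝ) * c x⌋ - ⌊((n₁ : ℕ) : ℝ) * c x⌋, ?_⟩
  intro x hx
  have hfx := congrFun hfeq ⟨x, hx⟩
  have hfloor : ⌊Int.fract (((n₁ : ℕ) : ℝ) * c x) * M⌋ = ⌊Int.fract (((n₂ : ℕ) : ℝ) * c x) * M⌋ := by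
    have h1 := congrArg (fun z : Fin M => (z : ℕ)) hfx
    simp only [hf] at h1
    have g0 : 0 ≤ ⌊Int.fract (((n₁ : ℕ) : ℝ) * c x) * M⌋ :=
      Int.floor_nonneg.mpr (mul_nonneg (Int.fract_nonneg _) hMR.le)
    have g1 : 0 ≤ ⌊Int.fract (((n₂ : ℕ) : ℝ) * c x) * M⌋ :=
      Int.floor_nonneg.mpr (mul_nonneg (Int.fract_nonneg _) hMR.le)
    omega
  have habs := abs_sub_lt_one_of_floor_eq hfloor
  have hrw : ((((n₂ : ℕ) - (n₁ : ℕ) : ℕ)) : ℝ) * c x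
      - ((⌊((n₂ : ℕ) : ℝ) * c x⌋ - ⌊((n₁ : ℕ) : ℝ) * c x⌋ : ℤ) : ℝ)
      = Int.fract (((n₂ : ℕ) : ℝ) * c x) - Int.fract (((n₁ : ℕ) : ℝ) * c x) := by
    have hc : (((n₂ : ℕ) - (n₁ : ℕ) : ℕ) : ℝ) = ((n₂ : ℕ) : ℝ) - ((n₁ : ℕ) : ℝ) := by
      push_cast [Nat.cast_sub hlt.le]; ring
    rw [hc]
    unfold Int.fract
    push_cast
    ring
  rw [hrw]
  have hdiv : |Int.fract (((n₂ : ℕ) : ℝ) * c x) - Int.fract (((n₁ : ℕ) : ℝ) * c x)| * M < 1 := by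
    calc |Int.fract (((n₂ : ℕ) : ℝ) * c x) - Int.fract (((n₁ : ℕ) : ℝ) * c x)| * M
        = |Int.fract (((n₁ : ℕ) : ℝ) * c x) * M - Int.fract (((n₂ : ℕ) : ℝ) * c x) * M| := by
          rw [← sub_mul, abs_mul, abs_of_pos hMR, abs_sub_comm]
      _ < 1 := habs
  have h1M : (1 : ℝ) / M < ε := by
    rw [div_lt_iff₀ hMR]
    rw [div_lt_iff₀ hε] at hM
    linarith [hM]
  have := (lt_div_iff₀ hMR).mpr hdiv
  calc |Int.fract (((n₂ : ℕ) : ℝ) * c x) - Int.fract (((n₁ : ℕ) : ℝ) * c x)|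
      ≤ 1 / M := ((lt_div_iff₀ hMR).mpr (by linarith [hdiv])).le
    _ ≤ ε := h1M.le

end Dirichlet

section Intrinsic

variable {d : ℕ}

lemma mem_intrinsicInterior_iff' (C : Set (Fin d → ℝ)) (x : Fin d → ℝ) :
    x ∈ intrinsicInterior ℝ C ↔ x ∈ affineSpan ℝ C ∧
      ∃ ε > (0 : ℝ), ∀ z ∈ affineSpan ℝ C, dist z x < ε → z ∈ C := by
  rw [mem_intrinsicInterior]
  constructor
  · rintro ⟨y, hy, rfl⟩
    refine ⟨y.2, ?_⟩
    rw [mem_interior_iff_mem_nhds, Metric.mem_nhds_iff] at hy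
    obtain ⟨ε, hε, hball⟩ := hy
    refine ⟨ε, hε, fun z hz hdist => ?_⟩
    have : (⟨z, hz⟩ : affineSpan ℝ C) ∈ Metric.ball y ε := by
      rw [Metric.mem_ball, Subtype.dist_eq]
      exact hdist
    exact hball this
  · rintro ⟨hx, ε, hε, h⟩
    refine ⟨⟨x, hx⟩, ?_, rfl⟩
    rw [mem_interior_iff_mem_nhds, Metric.mem_nhds_iff]
    refine ⟨ε, hε, fun z hz => ?_⟩
    rw [Metric.mem_ball, Subtype.dist_eq] at hz
    exact h z z.2 hz

end Intrinsic

section Existence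

variable {d : ℕ} {S : Set (Fin d → ℝ)}

lemma dirWidth_nonneg (hne : S.Nonempty) {v : Fin d → ℤ} (hb : IsBddDir S v) :
    0 ≤ dirWidth S v := osc_nonneg hne (osc_of_bdd hb)

lemma norm_pos_of_ne_zero {v : Fin d → ℤ} (hv : v ≠ 0) : 0 < ‖ic v‖ := by
  rw [norm_pos_iff]
  exact fun h => hv (ic_eq_zero_iff.mp h)

/-- The key compactness/approximation contradiction. -/
lemma no_unbounded_seq (hne : S.Nonempty) {m C : ℝ} (hm0 : 0 < m)
    (hm : latticeWidth S = ((m : ℝ) : EReal))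
    (vseq : ℕ → (Fin d → ℤ))
    (hv : ∀ n, vseq n ≠ 0 ∧ IsBddDir S (vseq n) ∧ dirWidth S (vseq n) ≤ C)
    (hnorm : ∀ n : ℕ, (n : ℝ) < ‖ic (vseq n)‖) : False := by
  classical
  have hC0 : 0 ≤ C := le_trans (dirWidth_nonneg hne (hv 0).2.1) (hv 0).2.2
  set useq : ℕ → (Fin d → ℝ) := fun n => ‖ic (vseq n)‖⁻¹ • ic (vseq n) with huseq
  have hpos : ∀ n, 0 < ‖ic (vseq n)‖ := fun n => norm_pos_of_ne_zero (hv n).1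
  have husphere : ∀ n, useq n ∈ Metric.sphere (0 : Fin d → ℝ) 1 := by
    intro n
    rw [mem_sphere_zero_iff_norm, huseq, norm_smul, norm_inv, norm_norm]
    exact inv_mul_cancel₀ (hpos n).ne'
  obtain ⟨u, humem, φ, hφ, hconv⟩ :=
    (isCompact_sphere (0 : Fin d → ℝ) 1).tendsto_subseq husphere
  have hu1 : ‖u‖ = 1 := mem_sphere_zero_iff_norm.mp humem
  -- oscillation of u is 0
  have hosc_u : Osc S u 0 := by
    intro s hs t ht
    set g : (Fin d → ℝ) → ℝ := fun x => (∑ i, x i * s i) - (∑ i, x i * t i) with hg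
    have hcg : Continuous g := by
      apply Continuous.sub <;>
        exact continuous_finset_sum _ (fun i _ => (continuous_apply i).mul continuous_const)
    have hglim : Filter.Tendsto (fun n => g (useq (φ n))) Filter.atTop (nhds (g u)) :=
      (hcg.continuousAt.tendsto).comp hconv
    have hbound : ∀ n, g (useq (φ n)) ≤ C * ‖ic (vseq (φ n))‖⁻¹ := by
      intro n
      have h1 : Osc S (ic (vseq (φ n))) C := osc_mono (osc_of_bdd (hv (φ n)).2.1) (hv (φ n)).2.2
      have h2 : Osc S (useq (φ n)) (‖ic (vseq (φ n))‖⁻¹ * C) :=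
        osc_smul_nonneg h1 (inv_nonneg.mpr (hpos (φ n)).le)
      have := h2 s hs t ht
      rw [mul_comm] at this
      exact this
    have hrlim : Filter.Tendsto (fun n => C * ‖ic (vseq (φ n))‖⁻¹) Filter.atTop (nhds 0) := by
      rw [show (0 : ℝ) = C * 0 by ring]
      apply Filter.Tendsto.const_mul
      apply Filter.Tendsto.inv_tendsto_atTop
      apply Filter.tendsto_atTop_mono (fun n => (hnorm (φ n)).le.trans' ?_)
        tendsto_natCast_atTop_atTop
      exact_mod_cast Nat.cast_le.mpr (hφ.id_le n)
    exact le_of_tendsto_of_tendsto' hglim hrlim hbound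
  -- u lies in the span of bounded directions
  set V : Submodule ℝ (Fin d → ℝ) :=
    Submodule.span ℝ (ic '' {v : Fin d → ℤ | v ≠ 0 ∧ IsBddDir S v}) with hV
  have huV : u ∈ V := by
    have hclosed : IsClosed (V : Set (Fin d → ℝ)) := Submodule.closed_of_finiteDimensional V
    apply hclosed.mem_of_tendsto hconv
    filter_upwards with n
    exact Submodule.smul_mem _ _
      (Submodule.subset_span ⟨vseq (φ n), ⟨(hv (φ n)).1, (hv (φ n)).2.1⟩, rfl⟩)
  rw [hV] at huV
  obtain ⟨co, hsupp, hsum⟩ := Submodule.mem_span_set.mp huV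
  have hbex : ∀ x : {x // x ∈ co.support}, ∃ b : Fin d → ℤ,
      (b ≠ 0 ∧ IsBddDir S b) ∧ ic b = ↑x := by
    intro x
    obtain ⟨b, hb, hbic⟩ := hsupp x.2
    exact ⟨b, hb, hbic⟩
  choose b hb hbic using hbex
  have hu_sum : u = ∑ x ∈ co.support.attach, co ↑x • (↑x : Fin d → ℝ) := by
    rw [← hsum, Finsupp.sum]
    rw [← Finset.sum_attach co.support (fun y => co y • y)]
  set S₁ := ∑ x ∈ co.support.attach, dirWidth S (b x) with hS₁
  set S₂ := ∑ x ∈ co.support.attach, ‖(↑x : Fin d → ℝ)‖ with hS₂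
  have hS₁0 : 0 ≤ S₁ := Finset.sum_nonneg fun x _ => dirWidth_nonneg hne (hb x).2
  have hS₂0 : 0 ≤ S₂ := Finset.sum_nonneg fun x _ => norm_nonneg _
  set ε := min (m / (2 * (S₁ + 1))) (1 / (2 * (S₂ + 1))) with hεdef
  have hε : 0 < ε := lt_min (by positivity) (by positivity)
  obtain ⟨q, hq0, P, hP⟩ := dirichlet_simul co.support.attach (fun x => co ↑x) hε
  set w : Fin d → ℤ := ∑ x ∈ co.support.attach, P x • b x with hw
  have hicw : ic w = ∑ x ∈ co.support.attach, ((P x : ℝ)) • (↑x : Fin d → ℝ) := by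
    rw [hw, ic_sum]
    exact Finset.sum_congr rfl fun x _ => by rw [ic_zsmul, hbic]
  have hdecomp : ic w = (q : ℝ) • u +
      ∑ x ∈ co.support.attach, (((P x : ℝ)) - (q : ℝ) * co ↑x) • (↑x : Fin d → ℝ) := by
    rw [hicw, hu_sum, Finset.smul_sum, ← Finset.sum_add_distrib]
    apply Finset.sum_congr rfl
    intro x _
    rw [smul_smul, ← add_smul]
    ring_nf
  have habs : ∀ x ∈ co.support.attach, |((P x : ℝ)) - (q : ℝ) * co ↑x| ≤ ε := by
    intro x hx
    rw [abs_sub_comm]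
    exact hP x hx
  have hosc_w : Osc S (ic w)
      ((q : ℝ) * 0 + ∑ x ∈ co.support.attach, ε * dirWidth S (b x)) := by
    rw [hdecomp]
    apply osc_add (osc_smul_nonneg hosc_u (by positivity))
    apply osc_sum
    intro x hx
    have h1 : Osc S (↑x : Fin d → ℝ) (dirWidth S (b x)) := by
      rw [← hbic x]; exact osc_of_bdd (hb x).2
    apply osc_mono (osc_smul h1 (dirWidth_nonneg hne (hb x).2))
    exact mul_le_mul_of_nonneg_right (habs x hx) (dirWidth_nonneg hne (hb x).2)
  have hoscw' : Osc S (ic w) (ε * S₁) := by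
    have : (q : ℝ) * 0 + ∑ x ∈ co.support.attach, ε * dirWidth S (b x) = ε * S₁ := by
      rw [mul_zero, zero_add, hS₁, Finset.mul_sum]
    rwa [this] at hosc_w
  have hεS₁ : ε * S₁ < m := by
    have h1 : ε ≤ m / (2 * (S₁ + 1)) := min_le_left _ _
    have h2 : ε * S₁ ≤ m / (2 * (S₁ + 1)) * S₁ := mul_le_mul_of_nonneg_right h1 hS₁0
    have h3 : m / (2 * (S₁ + 1)) * S₁ < m := by
      rw [div_mul_eq_mul_div, div_lt_iff₀ (by positivity)]
      nlinarith
    linarith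
  -- w is nonzero
  have herr : ‖∑ x ∈ co.support.attach, (((P x : ℝ)) - (q : ℝ) * co ↑x) • (↑x : Fin d → ℝ)‖
      ≤ ε * S₂ := by
    calc ‖∑ x ∈ co.support.attach, (((P x : ℝ)) - (q : ℝ) * co ↑x) • (↑x : Fin d → ℝ)‖
        ≤ ∑ x ∈ co.support.attach, ‖(((P x : ℝ)) - (q : ℝ) * co ↑x) • (↑x : Fin d → ℝ)‖ :=
          norm_sum_le _ _
      _ ≤ ∑ x ∈ co.support.attach, ε * ‖(↑x : Fin d → ℝ)‖ := by
          apply Finset.sum_le_sum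
          intro x hx
          rw [norm_smul, Real.norm_eq_abs]
          exact mul_le_mul_of_nonneg_right (habs x hx) (norm_nonneg _)
      _ = ε * S₂ := by rw [hS₂, Finset.mul_sum]
  have hεS₂ : ε * S₂ ≤ 1 / 2 := by
    have h1 : ε ≤ 1 / (2 * (S₂ + 1)) := min_le_right _ _
    have h2 : ε * S₂ ≤ 1 / (2 * (S₂ + 1)) * S₂ := mul_le_mul_of_nonneg_right h1 hS₂0
    have h3 : 1 / (2 * (S₂ + 1)) * S₂ ≤ 1 / 2 := by
      rw [div_mul_eq_mul_div, div_le_div_iff₀ (by positivity) (by norm_num)]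
      nlinarith
    linarith
  have hq1 : (1 : ℝ) ≤ (q : ℝ) := by exact_mod_cast hq0
  have hnormw : (0 : ℝ) < ‖ic w‖ := by
    have h1 : ‖(q : ℝ) • u‖ - ‖-(∑ x ∈ co.support.attach,
        (((P x : ℝ)) - (q : ℝ) * co ↑x) • (↑x : Fin d → ℝ))‖ ≤ ‖ic w‖ := by
      rw [hdecomp, ← sub_neg_eq_add]
      exact norm_sub_norm_le _ _
    rw [norm_neg, norm_smul, hu1, Real.norm_eq_abs, abs_of_nonneg (by positivity : (0:ℝ) ≤ (q:ℝ)),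
      mul_one] at h1
    linarith [herr]
  have hw0 : w ≠ 0 := by
    intro h
    rw [h, ic_zero, norm_zero] at hnormw
    exact lt_irrefl _ hnormw
  obtain ⟨hbddw, hlew⟩ := bdd_of_osc hne hoscw'
  have := m_le_dirWidth hm hw0 hbddw
  linarith

end Existence

section Minimizer

variable {d : ℕ} {S : Set (Fin d → ℝ)}

lemma widthDirs_nonempty (hne : S.Nonempty) (hpos : (0 : EReal) < latticeWidth S)
    (hfin : latticeWidth S < ⊤) : ∃ v, v ∈ widthDirs S := by
  classical
  obtain ⟨m, hm0, hm⟩ := exists_real_width hpos hfin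
  -- there exists a bounded nonzero direction
  have hex : ∃ v₀ : Fin d → ℤ, v₀ ≠ 0 ∧ IsBddDir S v₀ := by
    by_contra h
    push_neg at h
    have hempty : {v : Fin d → ℤ | v ≠ 0 ∧ IsBddDir S v} = ∅ := by
      ext v; simp only [Set.mem_setOf_eq, Set.mem_empty_iff_false, iff_false]
      rintro ⟨h1, h2⟩; exact (h v h1) h2
    rw [latticeWidth, hempty] at hfin
    simp at hfin
  obtain ⟨v₀, hv₀0, hv₀b⟩ := hex
  set C := dirWidth S v₀ with hC
  set W : Set (Fin d → ℤ) := {v | v ≠ 0 ∧ IsBddDir S v ∧ dirWidth S v ≤ C} with hW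
  have hv₀W : v₀ ∈ W := ⟨hv₀0, hv₀b, le_refl _⟩
  -- W is bounded
  have hbdd : ∃ R : ℝ, ∀ v ∈ W, ‖ic v‖ ≤ R := by
    by_contra h
    push_neg at h
    have hseq : ∀ n : ℕ, ∃ v ∈ W, (n : ℝ) < ‖ic v‖ := fun n => h n
    choose vseq hvW hvnorm using hseq
    exact no_unbounded_seq hne hm0 hm vseq (fun n => (hvW n)) hvnorm
  obtain ⟨R, hR⟩ := hbdd
  -- W is finite
  have hWfin : W.Finite := by
    have hsub : W ⊆ {v : Fin d → ℤ | ∀ i, v i ∈ Set.Icc (-(⌈R⌉ : ℤ)) ⌈R⌉} := by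
      intro v hv i
      have h1 : ‖ic v i‖ ≤ ‖ic v‖ := norm_le_pi_norm (ic v) i
      have h2 : ‖ic v‖ ≤ R := hR v hv
      have h3 : |(v i : ℝ)| ≤ R := by
        rw [← Real.norm_eq_abs]; exact h1.trans h2
      have h4 : |(v i : ℝ)| ≤ (⌈R⌉ : ℝ) := h3.trans (Int.le_ceil R)
      rw [← Int.cast_abs] at h4
      have h5 : |v i| ≤ ⌈R⌉ := by exact_mod_cast h4
      rw [Set.mem_Icc]
      exact abs_le.mp h5
    apply Set.Finite.subset ?_ hsub
    have : {v : Fin d → ℤ | ∀ i, v i ∈ Set.Icc (-(⌈R⌉ : ℤ)) ⌈R⌉}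
        = Set.pi Set.univ (fun _ : Fin d => Set.Icc (-(⌈R⌉ : ℤ)) ⌈R⌉) := by
      ext v
      simp only [Set.mem_pi, Set.mem_univ, forall_true_left, Set.mem_setOf_eq, true_implies]
    rw [this]
    exact Set.Finite.pi fun _ => Set.finite_Icc _ _
  -- take the minimizer
  obtain ⟨vm, hvmW, hmin⟩ := Set.exists_min_image W (dirWidth S) hWfin ⟨v₀, hv₀W⟩
  refine ⟨vm, hvmW.1, hvmW.2.1, ?_⟩
  apply le_antisymm
  · -- coe dirWidth vm ≤ latticeWidth
    apply le_iInf₂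
    intro v hv
    rcases le_or_gt (dirWidth S v) C with hvC | hvC
    · exact_mod_cast EReal.coe_le_coe_iff.mpr (hmin v ⟨hv.1, hv.2, hvC⟩)
    · exact EReal.coe_le_coe_iff.mpr ((hmin v₀ hv₀W).trans hvC.le)
  · exact latticeWidth_le hvmW.1 hvmW.2.1
end Minimizer

/-- For `S ⊆ ℝ^d` with `0 < width(S) < ∞`, the convex hull of the set `S'` of lattice
    width directions is nonempty, convex and centrally symmetric, its relative interior
    contains no lattice point other than the origin, and the lattice points of
    `conv S'` outside its relative interior are precisely the elements of `S'`. -/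
theorem convexHull_widthDirs_properties {d : ℕ} (S : Set (Fin d → ℝ))
    (hne : S.Nonempty) (hpos : (0 : EReal) < latticeWidth S)
    (hfin : latticeWidth S < ⊤) :
    (convexHull ℝ (ic '' widthDirs S)).Nonempty ∧
    Convex ℝ (convexHull ℝ (ic '' widthDirs S)) ∧
    convexHull ℝ (ic '' widthDirs S) = -(convexHull ℝ (ic '' widthDirs S)) ∧
    {v : Fin d → ℤ | ic v ∈ intrinsicInterior ℝ (convexHull ℝ (ic '' widthDirs S))}
      ⊆ {0} ∧
    {v : Fin d → ℤ | ic v ∈ convexHull ℝ (ic '' widthDirs S) ∧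
        ic v ∉ intrinsicInterior ℝ (convexHull ℝ (ic '' widthDirs S))} = widthDirs S := by
  obtain ⟨m, hm0, hm⟩ := exists_real_width hpos hfin
  obtain ⟨vm, hvm⟩ := widthDirs_nonempty hne hpos hfin
  set K := convexHull ℝ (ic '' widthDirs S) with hK
  have hKconv : Convex ℝ K := convex_convexHull _ _
  have hKne : K.Nonempty := ⟨ic vm, subset_convexHull _ _ ⟨vm, hvm, rfl⟩⟩
  -- symmetry of the generating set and of K
  have hsymmset : -(ic '' widthDirs S) = ic '' widthDirs S := by
    ext x
    rw [Set.mem_neg]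
    constructor
    · rintro ⟨v, hv, hvx⟩
      exact ⟨-v, widthDirs_neg hne hv, by rw [ic_neg, hvx]; ext i; simp⟩
    · rintro ⟨v, hv, hvx⟩
      exact ⟨-v, widthDirs_neg hne hv, by rw [ic_neg, hvx]⟩
  have hsymm : K = -K := by
    rw [hK, ← convexHull_neg, hsymmset]
  have hdirm : ∀ v ∈ widthDirs S, dirWidth S v = m := by
    intro v hv
    have h := hv.2.2
    rw [hm] at h
    exact_mod_cast h
  -- oscillation bound on the hull
  have hullOsc : ∀ x ∈ K, Osc S x m := by
    intro x hx
    have hsubset : ic '' widthDirs S ⊆ {y | Osc S y m} := by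
      rintro _ ⟨v, hv, rfl⟩
      have := osc_of_bdd (S := S) hv.2.1
      rwa [hdirm v hv] at this
    have hconvo : Convex ℝ {y : Fin d → ℝ | Osc S y m} := by
      intro y hy z hz a b ha hb hab
      have h := osc_add (osc_smul_nonneg hy ha) (osc_smul_nonneg hz hb)
      rwa [show a * m + b * m = m by rw [← add_mul, hab, one_mul]] at h
    exact convexHull_min hsubset hconvo hx
  -- lattice points of the hull are width directions (if nonzero)
  have hlatmem : ∀ v : Fin d → ℤ, v ≠ 0 → ic v ∈ K → v ∈ widthDirs S := by
    intro v hv0 hvK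
    obtain ⟨hb, hle⟩ := bdd_of_osc hne (hullOsc _ hvK)
    have hge := m_le_dirWidth hm hv0 hb
    exact ⟨hv0, hb, by rw [le_antisymm hle hge, hm]⟩
  -- 0 belongs to the hull
  have h0K : (0 : Fin d → ℝ) ∈ K := by
    have h1 : ic vm ∈ K := subset_convexHull _ _ ⟨vm, hvm, rfl⟩
    have h2 : ic (-vm) ∈ K := subset_convexHull _ _ ⟨-vm, widthDirs_neg hne hvm, rfl⟩
    have h3 := hKconv h1 h2 (by norm_num : (0:ℝ) ≤ 1/2) (by norm_num : (0:ℝ) ≤ 1/2)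
      (by norm_num)
    rw [ic_neg] at h3
    rw [show (0 : Fin d → ℝ) = (1/2 : ℝ) • ic vm + (1/2 : ℝ) • (-ic vm) by
      ext i; simp]
    exact h3
  -- 0 is in the intrinsic interior
  have h0int : (0 : Fin d → ℝ) ∈ intrinsicInterior ℝ K := by
    obtain ⟨y, hy⟩ := Set.Nonempty.intrinsicInterior hKconv hKne
    rw [mem_intrinsicInterior_iff'] at hy ⊢
    obtain ⟨hyA, ε, hε, hyball⟩ := hy
    refine ⟨subset_affineSpan ℝ K h0K, ε, hε, ?_⟩
    intro z hzA hz
    have hz0 : ‖z‖ < ε := by rwa [dist_zero_right] at hz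
    have h0A : (0 : Fin d → ℝ) ∈ affineSpan ℝ K := subset_affineSpan ℝ K h0K
    have hyzA : y + z ∈ affineSpan ℝ K := by
      have := AffineSubspace.smul_vsub_vadd_mem (affineSpan ℝ K) (1 : ℝ) hzA h0A hyA
      simpa [vsub_eq_sub, vadd_eq_add, add_comm] using this
    have hyzA' : y - z ∈ affineSpan ℝ K := by
      have := AffineSubspace.smul_vsub_vadd_mem (affineSpan ℝ K) (-1 : ℝ) hzA h0A hyA
      simpa [vsub_eq_sub, vadd_eq_add, sub_eq_add_neg, add_comm] using this
    have h1 : y + z ∈ K := hyball _ hyzA (by rw [dist_eq_norm]; simpa using hz0)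
    have h2 : y - z ∈ K := hyball _ hyzA' (by rw [dist_eq_norm]; simpa using hz0)
    have h3 : z - y ∈ K := by
      rw [hsymm, Set.mem_neg]
      simpa [neg_sub] using h2
    have h4 := hKconv h1 h3 (by norm_num : (0:ℝ) ≤ 1/2) (by norm_num : (0:ℝ) ≤ 1/2)
      (by norm_num)
    rw [show ((1/2 : ℝ) • (y + z) + (1/2 : ℝ) • (z - y)) = z by
      ext i; simp [Pi.add_apply, Pi.sub_apply]; ring] at h4
    exact h4
  -- width directions are not in the intrinsic interior
  have hnotint : ∀ v ∈ widthDirs S, ic v ∉ intrinsicInterior ℝ K := by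
    intro v hv hint
    rw [mem_intrinsicInterior_iff'] at hint
    obtain ⟨hvA, ε, hε, hball⟩ := hint
    set t := ε / (2 * (‖ic v‖ + 1)) with ht
    have ht0 : 0 < t := by positivity
    have h0A : (0 : Fin d → ℝ) ∈ affineSpan ℝ K := subset_affineSpan ℝ K h0K
    have hzA : (1 + t) • ic v ∈ affineSpan ℝ K := by
      have := AffineSubspace.smul_vsub_vadd_mem (affineSpan ℝ K) t hvA h0A hvA
      have heq : t • (ic v -ᵥ 0) +ᵥ ic v = (1 + t) • ic v := by
        simp [vsub_eq_sub, vadd_eq_add, add_smul, one_smul, add_comm]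
      rwa [heq] at this
    have hdist : dist ((1 + t) • ic v) (ic v) < ε := by
      rw [dist_eq_norm]
      have heq : (1 + t) • ic v - ic v = t • ic v := by
        ext i; simp [add_smul]
      rw [heq, norm_smul, Real.norm_eq_abs, abs_of_pos ht0]
      have h1 : t * ‖ic v‖ ≤ t * (‖ic v‖ + 1) := by nlinarith [norm_nonneg (ic v), ht0]
      have h2 : t * (‖ic v‖ + 1) = ε / 2 := by
        rw [ht]; field_simp
      linarith
    have hzK := hball _ hzA hdist
    have hosc := hullOsc _ hzK
    have ht1 : (0 : ℝ) < 1 + t := by linarith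
    have hoscv : Osc S (ic v) ((1 + t)⁻¹ * m) := by
      have h := osc_smul_nonneg hosc (inv_nonneg.mpr ht1.le)
      rwa [smul_smul, inv_mul_cancel₀ ht1.ne', one_smul] at h
    obtain ⟨_, hle⟩ := bdd_of_osc hne hoscv
    have hdw : dirWidth S v = m := hdirm v hv
    have hlt : (1 + t)⁻¹ * m < m := by
      rw [inv_mul_lt_iff₀ ht1]
      nlinarith
    rw [hdw] at hle
    linarith
  refine ⟨hKne, hKconv, hsymm, ?_, ?_⟩
  · intro v hv
    simp only [Set.mem_setOf_eq] at hv
    rw [Set.mem_singleton_iff]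
    by_contra hv0
    exact hnotint v (hlatmem v hv0 (intrinsicInterior_subset hv)) hv
  · ext v
    simp only [Set.mem_setOf_eq]
    constructor
    · rintro ⟨hvK, hvnot⟩
      by_cases hv0 : v = 0
      · exfalso
        apply hvnot
        rw [hv0, ic_zero]
        exact h0int
      · exact hlatmem v hv0 hvK
    · intro hv
      exact ⟨subset_convexHull _ _ ⟨v, hv, rfl⟩, hnotint v hv⟩
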